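/- arXiv:1603.08316 — 6 statements merged into one kernel-verified Lean document; each statement's English description precedes it below -/
import Mathlib

section
/- Let k_E/k_F be a finite extension of finite fields and ψ a nontrivial additive character of k_F. Fix non-negative integers n, m. Then the function a ↦ Kl_a^{n,m}(ψ; k_E/k_F) is not constant on k_F^×, provided k_F^× has a nontrivial character (i.e., |k_F| > 2). -/
/-- The Kloosterman sum `Kl_a^{n,m}(ψ; k_E/k_F)`:
the sum of `ψ(Tr(t₁+⋯+t_n))·ψ(s₁+⋯+s_m)` over `t₁,…,t_n ∈ k_E^×` and
`s₁,…,s_m ∈ k_F^×` with `Nr(t₁)⋯Nr(t_n)·s₁⋯s_m = a`. -/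
noncomputable def Kl (kF kE : Type) [Field kF] [Fintype kF] [DecidableEq kF]
    [Field kE] [Fintype kE] [DecidableEq kE] [Algebra kF kE]
    (ψ : AddChar kF ℂ) (n m : ℕ) (a : kF) : ℂ :=
  ∑ t : Fin n → kEˣ, ∑ s : Fin m → kFˣ,
    if (∏ i, Algebra.norm kF ((t i : kE))) * (∏ j, ((s j : kF))) = a then
      ψ (Algebra.trace kF kE (∑ i, ((t i : kE)))) * ψ (∑ j, ((s j : kF)))
    else 0

private lemma AddChar.map_sum' {A M : Type*} [AddCommMonoid A] [CommMonoid M] (ψ : AddChar A M)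
    {ι : Type*} (s : Finset ι) (f : ι → A) : ψ (∑ i ∈ s, f i) = ∏ i ∈ s, ψ (f i) := by
  classical
  induction s using Finset.induction_on with
  | empty => simp
  | insert _ _ h ih => rw [Finset.sum_insert h, Finset.prod_insert h, AddChar.map_add_eq_mul, ih]

private lemma sum_units_eq_gaussSum {F : Type*} [Field F] [Fintype F] [DecidableEq F]
    (χ : MulChar F ℂ) (ψ : AddChar F ℂ) :
    ∑ u : Fˣ, χ (u : F) * ψ (u : F) = gaussSum χ ψ := by
  calc ∑ u : Fˣ, χ (u : F) * ψ (u : F)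
      = ∑ x : {x : F // x ≠ 0}, χ (x : F) * ψ (x : F) :=
        Fintype.sum_equiv unitsEquivNeZero _ _ (fun u => by simp)
    _ = ∑ x ∈ Finset.univ.filter (fun x : F => x ≠ 0), χ x * ψ x :=
        (Finset.sum_subtype _ (fun x => by simp) (fun x : F => χ x * ψ x)).symm
    _ = gaussSum χ ψ :=
        Finset.sum_subset (Finset.filter_subset _ _) (fun x _ hx => by
          simp only [Finset.mem_filter, Finset.mem_univ, true_and, not_not] at hx
          rw [hx, MulChar.map_nonunit χ not_isUnit_zero, zero_mul])

private lemma key {kF kE : Type} [Field kF] [Fintype kF] [DecidableEq kF]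
    [Field kE] [Fintype kE] [DecidableEq kE] [Algebra kF kE]
    (ψ : AddChar kF ℂ) (n m : ℕ) (χ : MulChar kF ℂ) :
    ∑ a : kFˣ, χ (a : kF) * Kl kF kE ψ n m (a : kF) =
      (∑ t : kEˣ, χ (Algebra.norm kF (t : kE)) * ψ (Algebra.trace kF kE (t : kE))) ^ n *
      (∑ s : kFˣ, χ (s : kF) * ψ (s : kF)) ^ m := by
  classical
  have step1 : ∀ (t : Fin n → kEˣ) (s : Fin m → kFˣ),
      (∑ a : kFˣ, if (∏ i, Algebra.norm kF ((t i : kE))) * (∏ j, ((s j : kF))) = (a : kF) then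
        χ (a : kF) * (ψ (Algebra.trace kF kE (∑ i, ((t i : kE)))) * ψ (∑ j, ((s j : kF)))) else 0)
      = (∏ i, χ (Algebra.norm kF ((t i : kE))) * ψ (Algebra.trace kF kE ((t i : kE)))) *
        (∏ j, χ ((s j : kF)) * ψ ((s j : kF))) := by
    intro t s
    set u : kFˣ := (∏ i, Units.map (Algebra.norm kF) (t i)) * ∏ j, s j with hu_def
    have hu : (u : kF) = (∏ i, Algebra.norm kF ((t i : kE))) * (∏ j, ((s j : kF))) := by
      rw [hu_def]
      push_cast
      rfl
    have hcond : ∀ a : kFˣ,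
        ((∏ i, Algebra.norm kF ((t i : kE))) * (∏ j, ((s j : kF))) = (a : kF)) ↔ a = u := by
      intro a
      rw [← hu]
      exact ⟨fun h => Units.ext h.symm, fun h => by rw [h]⟩
    rw [Finset.sum_congr rfl (fun a _ => if_congr (hcond a) rfl rfl)]
    rw [Finset.sum_ite_eq' Finset.univ u
      (fun a : kFˣ => χ (a : kF) * (ψ (Algebra.trace kF kE (∑ i, ((t i : kE)))) * ψ (∑ j, ((s j : kF)))))]
    simp only [Finset.mem_univ, if_true]
    rw [hu, map_mul, map_prod, map_prod, map_sum (Algebra.trace kF kE), AddChar.map_sum',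
      AddChar.map_sum', Finset.prod_mul_distrib, Finset.prod_mul_distrib]
    ring
  calc ∑ a : kFˣ, χ (a : kF) * Kl kF kE ψ n m (a : kF)
      = ∑ t : Fin n → kEˣ, ∑ s : Fin m → kFˣ,
          (∑ a : kFˣ, if (∏ i, Algebra.norm kF ((t i : kE))) * (∏ j, ((s j : kF))) = (a : kF) then
            χ (a : kF) * (ψ (Algebra.trace kF kE (∑ i, ((t i : kE)))) * ψ (∑ j, ((s j : kF)))) else 0) := by
        simp only [Kl, Finset.mul_sum, mul_ite, mul_zero]
        rw [Finset.sum_comm]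
        exact Finset.sum_congr rfl fun t _ => Finset.sum_comm
    _ = ∑ t : Fin n → kEˣ, ∑ s : Fin m → kFˣ,
          (∏ i, χ (Algebra.norm kF ((t i : kE))) * ψ (Algebra.trace kF kE ((t i : kE)))) *
          (∏ j, χ ((s j : kF)) * ψ ((s j : kF))) :=
        Finset.sum_congr rfl fun t _ => Finset.sum_congr rfl fun s _ => step1 t s
    _ = (∑ t : Fin n → kEˣ, ∏ i, χ (Algebra.norm kF ((t i : kE))) * ψ (Algebra.trace kF kE ((t i : kE)))) *
        (∑ s : Fin m → kFˣ, ∏ j, χ ((s j : kF)) * ψ ((s j : kF))) := by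
        rw [Finset.sum_mul_sum]
    _ = _ := by rw [Fintype.sum_pow, Fintype.sum_pow]


/-- The Kloosterman sum `a ↦ Kl_a^{n,m}(ψ; k_E/k_F)` is not constant on `k_F^×`,
provided `k_F^×` admits a nontrivial character, i.e. `|k_F| > 2`. -/
theorem stmt1 (kF kE : Type) [Field kF] [Fintype kF] [DecidableEq kF]
    [Field kE] [Fintype kE] [DecidableEq kE] [Algebra kF kE]
    (ψ : AddChar kF ℂ) (hψ : ψ ≠ 1) (n m : ℕ) (hcard : 2 < Fintype.card kF) :
    ¬ ∀ a b : kFˣ, Kl kF kE ψ n m (a : kF) = Kl kF kE ψ n m (b : kF) := by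
  intro h
  classical
  -- a nontrivial multiplicative character of kF
  have hne : ({0, 1} : Finset kF) ≠ Finset.univ := by
    intro heq
    have hle : ({0, 1} : Finset kF).card ≤ 2 :=
      (Finset.card_insert_le _ _).trans (by simp)
    rw [heq, Finset.card_univ] at hle
    omega
  obtain ⟨a₀, -, ha₀⟩ := Finset.exists_of_ssubset ((Finset.subset_univ _).ssubset_of_ne hne)
  simp only [Finset.mem_insert, Finset.mem_singleton, not_or] at ha₀
  obtain ⟨ha0, ha1⟩ := ha₀
  haveI : NeZero ((Monoid.exponent kFˣ : ℕ) : ℂ) :=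
    ⟨Nat.cast_ne_zero.mpr Monoid.exponent_ne_zero_of_finite⟩
  obtain ⟨χ, hχa⟩ := MulChar.exists_apply_ne_one_of_hasEnoughRootsOfUnity kF ℂ ha1
  have hχ : χ ≠ 1 := fun he => hχa (by rw [he, MulChar.one_apply (Ne.isUnit ha0)])
  -- pullback characters on kE
  let χE : MulChar kE ℂ :=
    { toFun := fun x => χ (Algebra.norm kF x)
      map_one' := by simp
      map_mul' := fun x y => by simp [map_mul]
      map_nonunit' := fun x hx => by
        have hx0 : x = 0 := by simpa [isUnit_iff_ne_zero, not_not] using hx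
        show χ (Algebra.norm kF x) = 0
        rw [hx0, Algebra.norm_zero]
        exact MulChar.map_nonunit χ not_isUnit_zero }
  let ψE : AddChar kE ℂ := ψ.compAddMonoidHom (Algebra.trace kF kE).toAddMonoidHom
  have hψE : ψE ≠ 1 := by
    obtain ⟨x, hx⟩ := DFunLike.ne_iff.mp hψ
    obtain ⟨y, hy⟩ := Algebra.trace_surjective kF kE x
    refine DFunLike.ne_iff.mpr ⟨y, ?_⟩
    simpa [ψE, hy] using hx
  have hψprim : ψ.IsPrimitive := AddChar.IsPrimitive.of_ne_one hψ
  have hψEprim : ψE.IsPrimitive := AddChar.IsPrimitive.of_ne_one hψE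
  -- the two Gauss-type sums
  set S : ℂ := ∑ t : kEˣ, χ (Algebra.norm kF (t : kE)) * ψ (Algebra.trace kF kE (t : kE)) with hS_def
  set T : ℂ := ∑ s : kFˣ, χ (s : kF) * ψ (s : kF) with hT_def
  have hSg : S = gaussSum χE ψE := by
    rw [hS_def, ← sum_units_eq_gaussSum χE ψE]
    rfl
  have hS : S ≠ 0 := by
    by_cases hχE : χE = 1
    · have h1 : S = ∑ t : kEˣ, ψE (t : kE) := by
        rw [hS_def]
        refine Finset.sum_congr rfl fun t _ => ?_
        have : χ (Algebra.norm kF (t : kE)) = χE (t : kE) := rfl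
        rw [this, hχE, MulChar.one_apply (Units.isUnit t), one_mul]
        rfl
      have h2 : ∑ t : kEˣ, ψE (t : kE) = (∑ x : kE, ψE x) - 1 := by
        have h3 : ∑ t : kEˣ, ψE (t : kE) = ∑ t : kEˣ, (1 : MulChar kE ℂ) (t : kE) * ψE (t : kE) :=
          Finset.sum_congr rfl fun t _ => by
            rw [MulChar.one_apply (Units.isUnit t), one_mul]
        rw [h3, sum_units_eq_gaussSum, gaussSum]
        have h4 : ∀ x : kE, (1 : MulChar kE ℂ) x * ψE x = ψE x - (if x = 0 then 1 else 0) := by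
          intro x
          by_cases hx : x = 0
          · rw [hx, MulChar.map_nonunit (1 : MulChar kE ℂ) (not_isUnit_zero (M₀ := kE)),
              zero_mul, AddChar.map_zero_eq_one, if_pos rfl]
            norm_num
          · simp [MulChar.one_apply (Ne.isUnit hx), hx]
        rw [Finset.sum_congr rfl fun x _ => h4 x, Finset.sum_sub_distrib,
          Finset.sum_ite_eq' Finset.univ (0 : kE) (fun _ => (1 : ℂ))]
        simp
      rw [h1, h2, AddChar.sum_eq_zero_of_ne_one hψE]
      norm_num
    · rw [hSg]
      exact gaussSum_ne_zero_of_nontrivial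
        (Nat.cast_ne_zero.mpr Fintype.card_ne_zero) hχE hψEprim
  have hT : T ≠ 0 := by
    rw [hT_def, sum_units_eq_gaussSum]
    exact gaussSum_ne_zero_of_nontrivial
      (Nat.cast_ne_zero.mpr Fintype.card_ne_zero) hχ hψprim
  -- sum of χ over units vanishes
  have hsum0 : ∑ a : kFˣ, χ (a : kF) = 0 := by
    have := sum_units_eq_gaussSum χ (1 : AddChar kF ℂ)
    simp only [AddChar.one_apply, mul_one] at this
    rw [this, gaussSum]
    simp only [AddChar.one_apply, mul_one]
    exact MulChar.sum_eq_zero_of_ne_one hχ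
  -- contradiction via the key identity
  have hkey := key ψ n m (kE := kE) χ
  have hconst : ∑ a : kFˣ, χ (a : kF) * Kl kF kE ψ n m (a : kF) = 0 := by
    calc ∑ a : kFˣ, χ (a : kF) * Kl kF kE ψ n m (a : kF)
        = ∑ a : kFˣ, χ (a : kF) * Kl kF kE ψ n m ((1 : kFˣ) : kF) :=
          Finset.sum_congr rfl fun a _ => by rw [h a 1]
      _ = (∑ a : kFˣ, χ (a : kF)) * Kl kF kE ψ n m ((1 : kFˣ) : kF) := by
          rw [Finset.sum_mul]
      _ = 0 := by rw [hsum0, zero_mul]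
  rw [hconst] at hkey
  exact (mul_ne_zero (pow_ne_zero n hS) (pow_ne_zero m hT)) hkey.symm
end

section
/- Let k_E/k_F be a finite extension of finite fields and ψ a nontrivial additive character of k_F. Fix non-negative integers n, m. Then there exists a ∈ k_F^× such that Kl_a^{n,m}(ψ; k_E/k_F) ≠ 0. -/
open Finset



/-- An additive character applied to a finite sum is the product of values. -/
lemma addChar_map_sum {A : Type*} [AddCommMonoid A] (φ : AddChar A ℂ)
    {ι : Type*} (s : Finset ι) (f : ι → A) :
    φ (∑ i ∈ s, f i) = ∏ i ∈ s, φ (f i) := by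
  classical
  induction s using Finset.induction with
  | empty => simp
  | insert _ _ h ih => rw [Finset.sum_insert h, Finset.prod_insert h, AddChar.map_add_eq_mul, ih]

/-- Sum of a nontrivial additive character of a finite field over the units is `-1`. -/
lemma units_sum_addChar {K : Type*} [Field K] [Fintype K] [DecidableEq K]
    (φ : AddChar K ℂ) (hφ : φ ≠ 0) : ∑ x : Kˣ, φ (x : K) = -1 := by
  have h0 : ∑ x : K, φ x = 0 := AddChar.sum_eq_zero_iff_ne_zero.2 hφ
  have hsplit : ∑ x : K, φ x = φ 0 + ∑ x ∈ univ.erase (0 : K), φ x :=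
    (Finset.add_sum_erase univ φ (mem_univ 0)).symm
  have hbij : ∑ x : Kˣ, φ (x : K) = ∑ x ∈ univ.erase (0 : K), φ x := by
    refine Finset.sum_bij (fun x _ => (x : K)) ?_ ?_ ?_ ?_
    · intro a _; exact Finset.mem_erase.2 ⟨a.ne_zero, mem_univ _⟩
    · intro a _ b _ h; exact Units.ext h
    · intro b hb; exact ⟨Units.mk0 b (Finset.mem_erase.1 hb).1, mem_univ _, rfl⟩
    · intros; rfl
  rw [h0, AddChar.map_zero_eq_one] at hsplit
  rw [hbij]
  linear_combination -hsplit

/-- The Kloosterman sum `Kl_a^{n,m}(ψ; k_E/k_F)` is nonzero for some `a ∈ k_F^×`. -/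
theorem stmt2 (kF kE : Type) [Field kF] [Fintype kF] [DecidableEq kF]
    [Field kE] [Fintype kE] [DecidableEq kE] [Algebra kF kE]
    (ψ : AddChar kF ℂ) (hψ : ψ ≠ 1) (n m : ℕ) :
    ∃ a : kFˣ, Kl kF kE ψ n m (a : kF) ≠ 0 := by
  classical
  set φ : AddChar kE ℂ := ψ.compAddMonoidHom (Algebra.trace kF kE).toAddMonoidHom with hφdef
  have hφ : φ ≠ 0 := by
    rw [AddChar.ne_zero_iff]
    obtain ⟨x, hx⟩ := AddChar.ne_one_iff.1 hψ
    obtain ⟨y, hy⟩ := Algebra.trace_surjective kF kE x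
    exact ⟨y, by simpa [hφdef, hy] using hx⟩
  have hψ0 : ψ ≠ 0 := by rwa [AddChar.ne_zero_iff, ← AddChar.ne_one_iff]
  have key : ∑ a : kF, Kl kF kE ψ n m a = (-1 : ℂ) ^ n * (-1 : ℂ) ^ m := by
    unfold Kl
    rw [Finset.sum_comm]
    have : ∀ t : Fin n → kEˣ,
        (∑ a : kF, ∑ s : Fin m → kFˣ,
          if (∏ i, Algebra.norm kF ((t i : kE))) * (∏ j, ((s j : kF))) = a then
            ψ (Algebra.trace kF kE (∑ i, ((t i : kE)))) * ψ (∑ j, ((s j : kF)))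
          else 0)
        = φ (∑ i, ((t i : kE))) * ∑ s : Fin m → kFˣ, ψ (∑ j, ((s j : kF))) := by
      intro t
      rw [Finset.sum_comm, Finset.mul_sum]
      refine Finset.sum_congr rfl fun s _ => ?_
      rw [Finset.sum_ite_eq univ _ (fun _ => _)]
      simp [hφdef]
    rw [Finset.sum_congr rfl fun t _ => this t, ← Finset.sum_mul]
    have hE : ∑ t : Fin n → kEˣ, φ (∑ i, ((t i : kE))) = (-1 : ℂ) ^ n := by
      have : ∀ t : Fin n → kEˣ, φ (∑ i, ((t i : kE))) = ∏ i, φ ((t i : kE)) :=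
        fun t => addChar_map_sum φ univ _
      rw [Finset.sum_congr rfl fun t _ => this t, ← Fintype.sum_pow (fun x : kEˣ => φ (x : kE)),
        units_sum_addChar φ hφ]
    have hF : ∑ s : Fin m → kFˣ, ψ (∑ j, ((s j : kF))) = (-1 : ℂ) ^ m := by
      have : ∀ s : Fin m → kFˣ, ψ (∑ j, ((s j : kF))) = ∏ j, ψ ((s j : kF)) :=
        fun s => addChar_map_sum ψ univ _
      rw [Finset.sum_congr rfl fun s _ => this s, ← Fintype.sum_pow (fun x : kFˣ => ψ (x : kF)),
        units_sum_addChar ψ hψ0]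
    rw [hE, hF]
  have hne : ∑ a : kF, Kl kF kE ψ n m a ≠ 0 := by
    rw [key]
    exact mul_ne_zero (pow_ne_zero _ (by norm_num)) (pow_ne_zero _ (by norm_num))
  obtain ⟨a, _, ha⟩ := Finset.exists_ne_zero_of_sum_ne_zero hne
  have ha0 : a ≠ 0 := by
    rintro rfl
    apply ha
    unfold Kl
    refine Finset.sum_eq_zero fun t _ => Finset.sum_eq_zero fun s _ => ?_
    rw [if_neg]
    apply mul_ne_zero
    · exact Finset.prod_ne_zero_iff.2 fun i _ =>
        (Algebra.norm_ne_zero_iff).2 (t i).ne_zero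
    · exact Finset.prod_ne_zero_iff.2 fun j _ => (s j).ne_zero
  exact ⟨Units.mk0 a ha0, ha⟩
end

section
/- Let k_E/k_F be a finite extension of finite fields and ψ a nontrivial additive character of k_F. Fix non-negative integers n, m. Let a, b ∈ k_F^× and c ∈ ℂ^×. If Kl_{ta}^{n,m}(ψ; k_E/k_F) = c · Kl_{tb}^{n,m}(ψ; k_E/k_F) for every t ∈ k_F^×, then c = 1 and a = b. -/
private lemma addChar_sum' {M A : Type*} [CommMonoid M] [AddCommMonoid A]
    (ψ : AddChar A M) {ι : Type*} (s : Finset ι) (f : ι → A) :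
    ψ (∑ i ∈ s, f i) = ∏ i ∈ s, ψ (f i) := by
  induction s using Finset.cons_induction with
  | empty => simp
  | cons a s ha ih => rw [Finset.sum_cons, Finset.prod_cons, AddChar.map_add_eq_mul, ih]

private lemma sum_units_add {F : Type*} [Field F] [Fintype F] [DecidableEq F] (f : F → ℂ) :
    ∑ x : F, f x = f 0 + ∑ x : Fˣ, f ↑x := by
  have hmap : (Finset.univ.map ⟨Units.val, fun _ _ => Units.ext⟩ : Finset F) = Finset.univ.erase 0 := by
    ext x
    simp only [Finset.mem_map, Finset.mem_univ, true_and, Finset.mem_erase,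
      Function.Embedding.coeFn_mk]
    constructor
    · rintro ⟨u, rfl⟩; exact ⟨u.ne_zero, trivial⟩
    · rintro ⟨hx, -⟩
      exact ⟨Units.mk0 x hx, rfl⟩
  rw [← Finset.sum_erase_add Finset.univ f (Finset.mem_univ 0), add_comm]
  congr 1
  rw [← hmap, Finset.sum_map]
  rfl

private noncomputable def normChar {kF kE : Type} [Field kF] [Fintype kF]
    [Field kE] [Fintype kE] [Algebra kF kE] (χ : MulChar kF ℂ) : MulChar kE ℂ :=
  MulChar.ofUnitHom (χ.toUnitHom.comp (Units.map (Algebra.norm kF : kE →* kF)))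

private lemma normChar_coe {kF kE : Type} [Field kF] [Fintype kF]
    [Field kE] [Fintype kE] [Algebra kF kE] (χ : MulChar kF ℂ) (x : kEˣ) :
    normChar χ (x : kE) = χ (Algebra.norm kF (x : kE)) := by
  rw [normChar, MulChar.ofUnitHom_coe]
  simp only [MonoidHom.comp_apply]
  rw [MulChar.coe_toUnitHom]
  congr 1

private lemma gauss_ne_zero {F : Type*} [Field F] [Fintype F] [DecidableEq F]
    (χ : MulChar F ℂ) {ψ : AddChar F ℂ} (hψ : ψ ≠ 1) :
    (∑ x : Fˣ, χ (x : F) * ψ (x : F)) ≠ 0 := by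
  have hbridge : ∑ x : Fˣ, χ (x : F) * ψ (x : F) = gaussSum χ ψ := by
    rw [gaussSum, sum_units_add (fun x => χ x * ψ x)]
    simp [MulChar.map_nonunit χ not_isUnit_zero]
  rw [hbridge]
  rcases eq_or_ne χ 1 with rfl | hχ
  · have hψ0 : ψ ≠ 0 := fun h0 =>
      hψ (AddChar.eq_one_iff.mpr (AddChar.eq_zero_iff.mp h0))
    have hsum : ∑ x : F, ψ x = 0 := AddChar.sum_eq_zero_iff_ne_zero.mpr hψ0
    have : gaussSum (1 : MulChar F ℂ) ψ = -1 := by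
      rw [gaussSum]
      have : ∑ x : F, (1 : MulChar F ℂ) x * ψ x = ∑ x : F, ψ x - ψ 0 +
          (1 : MulChar F ℂ) 0 * ψ 0 := by
        rw [sum_units_add (fun x => (1 : MulChar F ℂ) x * ψ x),
            sum_units_add (fun x => ψ x)]
        simp only [MulChar.one_apply_coe, one_mul]
        ring
      rw [this, hsum, MulChar.map_nonunit _ not_isUnit_zero]
      simp
    rw [this]; norm_num
  · exact gaussSum_ne_zero_of_nontrivial
      (Nat.cast_ne_zero.mpr Fintype.card_ne_zero) hχ (AddChar.IsPrimitive.of_ne_one hψ)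

private lemma mellinKl {kF kE : Type} [Field kF] [Fintype kF] [DecidableEq kF]
    [Field kE] [Fintype kE] [DecidableEq kE] [Algebra kF kE]
    (ψ : AddChar kF ℂ) (n m : ℕ) (χ : MulChar kF ℂ) (u : kFˣ) :
    ∑ t : kFˣ, χ (t : kF) * Kl kF kE ψ n m ((t : kF) * u) =
      χ ((u⁻¹ : kFˣ) : kF) *
        ((∑ x : kEˣ, normChar χ (x : kE) * ψ (Algebra.trace kF kE (x : kE))) ^ n *
         (∑ s : kFˣ, χ (s : kF) * ψ (s : kF)) ^ m) := by
  have inner : ∀ (ts : Fin n → kEˣ) (ss : Fin m → kFˣ),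
      (∑ t : kFˣ, χ (t : kF) *
        (if (∏ i, Algebra.norm kF ((ts i : kE))) * (∏ j, ((ss j : kF))) = (t : kF) * u then
          ψ (Algebra.trace kF kE (∑ i, ((ts i : kE)))) * ψ (∑ j, ((ss j : kF))) else 0))
      = χ ((u⁻¹ : kFˣ) : kF) *
          ((∏ i, (normChar χ ((ts i : kE)) * ψ (Algebra.trace kF kE ((ts i : kE))))) *
           (∏ j, (χ ((ss j : kF)) * ψ ((ss j : kF))))) := by
    intro ts ss
    set P : kFˣ := (∏ i, Units.map (Algebra.norm kF : kE →* kF) (ts i)) * ∏ j, ss j with hP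
    have hPval : (P : kF) = (∏ i, Algebra.norm kF ((ts i : kE))) * (∏ j, ((ss j : kF))) := by
      rw [hP, Units.val_mul]
      push_cast [Units.coe_map]
      rfl
    have hcond : ∀ t : kFˣ,
        ((∏ i, Algebra.norm kF ((ts i : kE))) * (∏ j, ((ss j : kF))) = (t : kF) * u)
          ↔ t = P * u⁻¹ := by
      intro t
      rw [← hPval]
      constructor
      · intro hh
        have : P = t * u := Units.ext (by rw [Units.val_mul]; exact hh)
        rw [this, mul_assoc, mul_inv_cancel, mul_one]
      · rintro rfl
        rw [← Units.val_mul, mul_assoc, inv_mul_cancel, mul_one]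
    simp_rw [hcond, mul_ite, mul_zero]
    rw [Finset.sum_ite_eq' Finset.univ (P * u⁻¹)
      (fun t => χ (t : kF) * (ψ (Algebra.trace kF kE (∑ i, ((ts i : kE)))) * ψ (∑ j, ((ss j : kF)))))]
    rw [if_pos (Finset.mem_univ _)]
    have hχP : χ ((P * u⁻¹ : kFˣ) : kF) =
        ((∏ i, χ (Algebra.norm kF ((ts i : kE)))) * (∏ j, χ ((ss j : kF)))) *
          χ ((u⁻¹ : kFˣ) : kF) := by
      rw [Units.val_mul, map_mul, hPval, map_mul, map_prod, map_prod]
    have hψtr : ψ (Algebra.trace kF kE (∑ i, ((ts i : kE)))) =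
        ∏ i, ψ (Algebra.trace kF kE ((ts i : kE))) := by
      rw [map_sum, addChar_sum']
    have hψs : ψ (∑ j, ((ss j : kF))) = ∏ j, ψ ((ss j : kF)) := addChar_sum' ψ _ _
    rw [hχP, hψtr, hψs]
    simp_rw [normChar_coe]
    rw [Finset.prod_mul_distrib, Finset.prod_mul_distrib]
    ring
  rw [Finset.sum_pow', Finset.sum_pow', Fintype.piFinset_univ, Fintype.piFinset_univ,
    Finset.sum_mul_sum, Finset.mul_sum]
  simp_rw [Finset.mul_sum]
  unfold Kl
  simp_rw [Finset.mul_sum]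
  rw [Finset.sum_comm]
  refine Finset.sum_congr rfl fun ts _ => ?_
  rw [Finset.sum_comm]
  refine Finset.sum_congr rfl fun ss _ => ?_
  exact inner ts ss


/-- If `Kl_{ta}^{n,m} = c · Kl_{tb}^{n,m}` for every `t ∈ k_F^×`, then `c = 1` and `a = b`. -/
theorem stmt4 (kF kE : Type) [Field kF] [Fintype kF] [DecidableEq kF]
    [Field kE] [Fintype kE] [DecidableEq kE] [Algebra kF kE]
    (ψ : AddChar kF ℂ) (hψ : ψ ≠ 1) (n m : ℕ) (a b : kFˣ) (c : ℂ) (hc : c ≠ 0)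
    (h : ∀ t : kFˣ, Kl kF kE ψ n m ((t : kF) * a) = c * Kl kF kE ψ n m ((t : kF) * b)) :
    c = 1 ∧ a = b := by
  haveI : Module.Finite kF kE := Module.Finite.of_finite
  haveI : Algebra.IsAlgebraic kF kE := Algebra.IsAlgebraic.of_finite kF kE
  haveI : Algebra.IsSeparable kF kE := inferInstance
  -- the additive character ψ ∘ Tr on kE is nontrivial
  set ψE : AddChar kE ℂ := ψ.compAddMonoidHom (Algebra.trace kF kE).toAddMonoidHom with hψE_def
  have hψE : ψE ≠ 1 := by
    obtain ⟨y, hy⟩ := AddChar.ne_one_iff.mp hψ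
    obtain ⟨x, hx⟩ := Algebra.trace_surjective kF kE y
    refine AddChar.ne_one_iff.mpr ⟨x, ?_⟩
    simpa [hψE_def, hx] using hy
  have key : ∀ χ : MulChar kF ℂ,
      χ ((a⁻¹ : kFˣ) : kF) = c * χ ((b⁻¹ : kFˣ) : kF) := by
    intro χ
    have h3 : ∑ t : kFˣ, χ (t : kF) * Kl kF kE ψ n m ((t : kF) * a) =
        c * ∑ t : kFˣ, χ (t : kF) * Kl kF kE ψ n m ((t : kF) * b) := by
      rw [Finset.mul_sum]
      exact Finset.sum_congr rfl fun t _ => by rw [h t]; ring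
    rw [mellinKl ψ n m χ a, mellinKl ψ n m χ b] at h3
    have hG : ((∑ x : kEˣ, normChar χ (x : kE) * ψ (Algebra.trace kF kE (x : kE))) ^ n *
        (∑ s : kFˣ, χ (s : kF) * ψ (s : kF)) ^ m) ≠ 0 := by
      refine mul_ne_zero (pow_ne_zero _ ?_) (pow_ne_zero _ (gauss_ne_zero χ hψ))
      have := gauss_ne_zero (normChar χ) hψE
      simpa [hψE_def] using this
    have h4 : χ ((a⁻¹ : kFˣ) : kF) *
        ((∑ x : kEˣ, normChar χ (x : kE) * ψ (Algebra.trace kF kE (x : kE))) ^ n *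
         (∑ s : kFˣ, χ (s : kF) * ψ (s : kF)) ^ m) =
        (c * χ ((b⁻¹ : kFˣ) : kF)) *
        ((∑ x : kEˣ, normChar χ (x : kE) * ψ (Algebra.trace kF kE (x : kE))) ^ n *
         (∑ s : kFˣ, χ (s : kF) * ψ (s : kF)) ^ m) := by
      rw [h3]; ring
    exact mul_right_cancel₀ hG h4
  have hc1 : c = 1 := by
    have := key 1
    rw [MulChar.one_apply_coe, MulChar.one_apply_coe] at this
    simpa using this.symm
  refine ⟨hc1, ?_⟩
  subst hc1
  by_contra hab
  have hne : ((a⁻¹ * b : kFˣ) : kF) ≠ 1 := by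
    intro hh
    exact hab (by
      have : (a⁻¹ * b : kFˣ) = 1 := Units.ext (by simpa using hh)
      rw [inv_mul_eq_one, eq_comm] at this
      exact this.symm)
  haveI : NeZero (Monoid.exponent kFˣ) := ⟨Monoid.exponent_ne_zero_of_finite⟩
  obtain ⟨χ, hχ⟩ := MulChar.exists_apply_ne_one_of_hasEnoughRootsOfUnity kF ℂ hne
  apply hχ
  have hk := key χ
  rw [one_mul] at hk
  have : χ ((a⁻¹ * b : kFˣ) : kF) = χ ((a⁻¹ : kFˣ) : kF) * χ ((b : kFˣ) : kF) := by
    rw [Units.val_mul, map_mul]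
  rw [this, hk, ← map_mul, ← Units.val_mul, inv_mul_cancel, Units.val_one, map_one]
end

section
/- Let E be a nonarchimedean local field (or more generally a complete discretely valued field) with ring of integers O_E, maximal ideal p_E, and fix a uniformizer ϖ. Let g ∈ GL_N(E) be a matrix with g_{ii} ∈ 1 + p_E for all i, g_{i,i+1} ∈ O_E^× for 1 ≤ i ≤ N−1, g_{N,1} ∈ ϖ·O_E^×, g_{ij} ∈ O_E for i < j, and g_{ij} ∈ p_E for i > j (with (i,j) ≠ (N,1) having g_{N1} of valuation exactly 1). Then the characteristic polynomial of g − I_N is an Eisenstein polynomial over O_E; in particular it is irreducible over E and g is a regular semisimple element of GL_N(E). -/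
open Polynomial Matrix

lemma perm_eq_finRotate_aux {n : ℕ} (σ : Equiv.Perm (Fin (n+1)))
    (h : ∀ i j : Fin (n+1), σ i ≤ i → σ j ≤ j → i = j) :
    σ = finRotate (n+1) := by
  have hσj : σ (σ.symm 0) = 0 := σ.apply_symm_apply 0
  have hj0 : σ (σ.symm 0) ≤ σ.symm 0 := by rw [hσj]; exact Fin.zero_le _
  have hlt : ∀ i, i ≠ σ.symm 0 → i < σ i := by
    intro i hi
    by_contra hle
    exact hi (h i (σ.symm 0) (not_lt.1 hle) hj0)
  have hjlast : σ.symm 0 = Fin.last n := by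
    by_contra hne
    have := hlt (Fin.last n) (fun e => hne e.symm)
    exact absurd this (not_lt.2 (Fin.le_last _))
  have hle : ∀ i : Fin (n+1), ((finRotate (n+1)) i : ℕ) ≤ (σ i : ℕ) := by
    intro i
    by_cases hi : i = Fin.last n
    · subst hi
      rw [finRotate_last]
      simp [← hjlast, hσj]
    · have h1 : i < σ i := hlt i (by rw [hjlast]; exact hi)
      have h2 : i < Fin.last n := Fin.lt_last_iff_ne_last.2 hi
      rw [finRotate_succ_apply, Fin.val_add_one_of_lt h2]
      exact h1
  have hsum : ∑ i : Fin (n+1), ((finRotate (n+1)) i : ℕ) = ∑ i : Fin (n+1), ((σ i : ℕ)) := by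
    rw [Equiv.sum_comp (finRotate (n+1)) (fun i : Fin (n+1) => (i : ℕ)),
      Equiv.sum_comp σ (fun i : Fin (n+1) => (i : ℕ))]
  have hpt : ∀ i : Fin (n+1), ((finRotate (n+1)) i : ℕ) = (σ i : ℕ) := by
    by_contra hc
    push_neg at hc
    obtain ⟨i, hi⟩ := hc
    have := Finset.sum_lt_sum (s := Finset.univ)
      (f := fun i : Fin (n+1) => ((finRotate (n+1)) i : ℕ))
      (g := fun i : Fin (n+1) => (σ i : ℕ))
      (fun k _ => hle k) ⟨i, Finset.mem_univ i, lt_of_le_of_ne (hle i) hi⟩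
    exact absurd hsum (Nat.ne_of_lt (by simpa using this))
  exact Equiv.ext fun i => Fin.val_injective (hpt i).symm

/-- An affine generic element `g` of the Iwahori subgroup of `GL_N(E)` (for `E` the fraction
field of a complete discrete valuation ring `O`, here more generally any DVR) has the property
that the characteristic polynomial of `g − 1` is Eisenstein over `O`; in particular it is
irreducible over `E`, and `g` is regular semisimple (its characteristic polynomial is
separable). -/
theorem stmt7 (O E : Type) [CommRing O] [IsDomain O] [IsDiscreteValuationRing O]
    [Field E] [CharZero E] [Algebra O E] [IsFractionRing O E]
    (ϖ : O) (hϖ : Irreducible ϖ)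
    (N : ℕ) (hN : 0 < N) (g : Matrix (Fin N) (Fin N) E)
    (hdiag : ∀ i : Fin N, ∃ x ∈ IsLocalRing.maximalIdeal O,
      g i i = algebraMap O E (1 + x))
    (hsup : ∀ i j : Fin N, (i : ℕ) + 1 = (j : ℕ) → ∃ x : Oˣ,
      g i j = algebraMap O E x)
    (hcorner : ∃ x : Oˣ, g ⟨N - 1, by omega⟩ ⟨0, hN⟩ = algebraMap O E (ϖ * x))
    (hupper : ∀ i j : Fin N, i < j → ∃ x : O, g i j = algebraMap O E x)
    (hlower : ∀ i j : Fin N, j < i → ∃ x ∈ IsLocalRing.maximalIdeal O,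
      g i j = algebraMap O E x) :
    (∃ q : Polynomial O, q.IsEisensteinAt (IsLocalRing.maximalIdeal O) ∧
        q.map (algebraMap O E) = (g - 1).charpoly) ∧
      Irreducible ((g - 1).charpoly) ∧ (Matrix.charpoly g).Separable := by
  classical
  have hinj : Function.Injective (algebraMap O E) := IsFractionRing.injective O E
  set p : Ideal O := IsLocalRing.maximalIdeal O with hpdef
  have hϖp : ϖ ∈ p := (IsLocalRing.mem_maximalIdeal ϖ).mpr (mem_nonunits_iff.mpr hϖ.not_isUnit)
  have hone : (1 : O) ∉ p := fun h1 =>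
    (IsLocalRing.maximalIdeal.isMaximal O).ne_top (Ideal.eq_top_of_isUnit_mem _ h1 isUnit_one)
  -- `ϖ ∉ p ^ 2`
  have hϖp2 : ϖ ∉ p ^ 2 := by
    intro hmem
    rw [hpdef, (IsDiscreteValuationRing.irreducible_iff_uniformizer ϖ).1 hϖ,
      Ideal.span_singleton_pow, Ideal.mem_span_singleton'] at hmem
    obtain ⟨t, ht⟩ := hmem
    have h1 : t * ϖ = 1 := mul_left_cancel₀ hϖ.ne_zero (by linear_combination ht :
      ϖ * (t * ϖ) = ϖ * 1)
    exact hϖ.not_isUnit (IsUnit.of_mul_eq_one (a := ϖ) t (by linear_combination h1))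
  by_cases hN1 : N = 1
  · -- N = 1 : the hypotheses are contradictory
    exfalso
    subst hN1
    obtain ⟨u, hu⟩ := hcorner
    obtain ⟨x, hx, hgx⟩ := hdiag ⟨0, hN⟩
    have h0 : algebraMap O E (1 + x) = algebraMap O E (ϖ * u) := hgx.symm.trans hu
    have : (1 : O) + x = ϖ * u := hinj h0
    have h1 : (1 : O) ∈ p := by
      have : (1 : O) = ϖ * u - x := by linear_combination this
      rw [this]
      exact Ideal.sub_mem _ (Ideal.mul_mem_right _ _ hϖp) hx
    exact hone h1
  · -- main case, N = n + 2
    obtain ⟨n, rfl⟩ : ∃ n, N = n + 2 := ⟨N - 2, by omega⟩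
    -- lift the matrix to O
    have key : ∀ i j : Fin (n+2), ∃ m : O, g i j = algebraMap O E m ∧
        (i = j → m - 1 ∈ p) ∧ ((i : ℕ) + 1 = (j : ℕ) → IsUnit m) ∧ (j < i → m ∈ p) := by
      intro i j
      rcases lt_trichotomy i j with hij | rfl | hij
      · by_cases hs : (i : ℕ) + 1 = (j : ℕ)
        · obtain ⟨x, hx⟩ := hsup i j hs
          exact ⟨x, hx, fun h => absurd h (ne_of_lt hij), fun _ => x.isUnit,
            fun h => absurd h (asymm hij)⟩
        · obtain ⟨x, hx⟩ := hupper i j hij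
          exact ⟨x, hx, fun h => absurd h (ne_of_lt hij), fun h => absurd h hs,
            fun h => absurd h (asymm hij)⟩
      · obtain ⟨x, hx, hgx⟩ := hdiag i
        refine ⟨1 + x, hgx, fun _ => by simpa using hx, fun h => by omega,
          fun h => absurd h (lt_irrefl i)⟩
      · obtain ⟨x, hx, hgx⟩ := hlower i j hij
        refine ⟨x, hgx, fun h => absurd h (ne_of_gt hij), fun h => ?_, fun _ => hx⟩
        · have := Fin.lt_iff_val_lt_val.1 hij
          omega
    set M : Matrix (Fin (n+2)) (Fin (n+2)) O := Matrix.of (fun i j => (key i j).choose) with hM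
    have hgM : ∀ i j, g i j = algebraMap O E (M i j) := fun i j => (key i j).choose_spec.1
    have hMd : ∀ i, M i i - 1 ∈ p := fun i => (key i i).choose_spec.2.1 rfl
    have hMs : ∀ i j : Fin (n+2), (i : ℕ) + 1 = (j : ℕ) → IsUnit (M i j) :=
      fun i j h => (key i j).choose_spec.2.2.1 h
    have hMl : ∀ i j : Fin (n+2), j < i → M i j ∈ p :=
      fun i j h => (key i j).choose_spec.2.2.2 h
    -- the corner entry
    obtain ⟨u, hu⟩ := hcorner
    have hlast0 : (Fin.last (n+1)) ≠ (0 : Fin (n+2)) := by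
      intro h
      have := congrArg Fin.val h
      simp at this
    have hMc : M (Fin.last (n+1)) 0 = ϖ * u := by
      apply hinj
      rw [← hgM]
      have h1 : (⟨n + 2 - 1, by omega⟩ : Fin (n+2)) = Fin.last (n+1) := by
        apply Fin.ext
        simp [Fin.val_last]
      have h2 : (⟨0, hN⟩ : Fin (n+2)) = 0 := by
        apply Fin.ext
        simp
      rw [← h1, ← h2]
      exact hu
    -- entries of M - 1
    have hsub_ne : ∀ i j : Fin (n+2), i ≠ j → (M - 1) i j = M i j := by
      intro i j hij
      simp [Matrix.sub_apply, Matrix.one_apply_ne hij]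
    have hsub_eq : ∀ i : Fin (n+2), (M - 1) i i = M i i - 1 := by
      intro i
      simp [Matrix.sub_apply, Matrix.one_apply_eq]
    -- factors in p
    have hfac : ∀ (σ : Equiv.Perm (Fin (n+2))) (i : Fin (n+2)), σ i ≤ i → (M - 1) i (σ i) ∈ p := by
      intro σ i hle
      rcases eq_or_lt_of_le hle with heq | hlt
      · rw [show σ i = i from heq, hsub_eq]
        exact hMd i
      · rw [hsub_ne i (σ i) (Ne.symm (ne_of_lt hlt))]
        exact hMl i (σ i) hlt
    -- the determinant of M - 1 is not in p^2
    have hdet : (M - 1).det ∉ p ^ 2 := by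
      intro hmem
      set c : Equiv.Perm (Fin (n+2)) := finRotate (n+2) with hc
      have hdet_eq : (M - 1).det = ∑ σ : Equiv.Perm (Fin (n+2)),
          ((Equiv.Perm.sign σ : ℤ) : O) * ∏ i, (M - 1) i (σ i) := by
        conv_lhs => rw [← Matrix.det_transpose, Matrix.det_apply']
        simp only [Matrix.transpose_apply]
      rw [← Finset.add_sum_erase _ _ (Finset.mem_univ c)] at hdet_eq
      -- all terms besides `c` lie in p^2
      have hrest : ∑ σ ∈ Finset.univ.erase c,
          ((Equiv.Perm.sign σ : ℤ) : O) * ∏ i, (M - 1) i (σ i) ∈ p ^ 2 := by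
        apply Ideal.sum_mem
        intro σ hσ
        have hσne : σ ≠ c := (Finset.mem_erase.1 hσ).1
        have htwo : ∃ i j : Fin (n+2), σ i ≤ i ∧ σ j ≤ j ∧ i ≠ j := by
          by_contra hcon
          push_neg at hcon
          exact hσne (perm_eq_finRotate_aux σ hcon)
        obtain ⟨i, j, hi, hj, hij⟩ := htwo
        apply Ideal.mul_mem_left
        have h1 : ∏ k, (M - 1) k (σ k) =
            (M - 1) i (σ i) * ∏ k ∈ Finset.univ.erase i, (M - 1) k (σ k) :=
          (Finset.mul_prod_erase _ _ (Finset.mem_univ i)).symm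
        have h2 : ∏ k ∈ Finset.univ.erase i, (M - 1) k (σ k) =
            (M - 1) j (σ j) * ∏ k ∈ (Finset.univ.erase i).erase j, (M - 1) k (σ k) :=
          (Finset.mul_prod_erase _ _ (Finset.mem_erase.2 ⟨fun h => hij h.symm, Finset.mem_univ j⟩)).symm
        rw [h1, h2, pow_two]
        exact Ideal.mul_mem_mul (hfac σ i hi)
          (Ideal.mul_mem_right _ _ (hfac σ j hj))
      -- the term at `c` is a unit times ϖ
      have hterm : ((Equiv.Perm.sign c : ℤ) : O) * ∏ i, (M - 1) i (c i) ∈ p ^ 2 := by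
        have : ((Equiv.Perm.sign c : ℤ) : O) * ∏ i, (M - 1) i (c i) =
            (M - 1).det - ∑ σ ∈ Finset.univ.erase c,
              ((Equiv.Perm.sign σ : ℤ) : O) * ∏ i, (M - 1) i (σ i) := by
          rw [hdet_eq]; ring
        rw [this]
        exact Ideal.sub_mem _ hmem hrest
      -- compute the term at c
      have hclast : c (Fin.last (n+1)) = 0 := finRotate_last
      have hprod : ∏ i, (M - 1) i (c i) =
          (ϖ * u) * ∏ i ∈ Finset.univ.erase (Fin.last (n+1)), (M - 1) i (c i) := by
        rw [← Finset.mul_prod_erase _ _ (Finset.mem_univ (Fin.last (n+1))), hclast,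
          hsub_ne _ _ hlast0, hMc]
      have hVunit : IsUnit (∏ i ∈ Finset.univ.erase (Fin.last (n+1)), (M - 1) i (c i)) := by
        apply Finset.prod_induction _ IsUnit (fun a b => IsUnit.mul) isUnit_one
        intro i hi
        have hi' : i ≠ Fin.last (n+1) := (Finset.mem_erase.1 hi).1
        have hilt : i < Fin.last (n+1) := Fin.lt_last_iff_ne_last.2 hi'
        have hval : ((c i : Fin (n+2)) : ℕ) = (i : ℕ) + 1 := by
          rw [hc, finRotate_succ_apply, Fin.val_add_one_of_lt hilt]
        have hne : i ≠ c i := by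
          intro h
          have := congrArg Fin.val h
          omega
        rw [hsub_ne i (c i) hne]
        exact hMs i (c i) hval.symm
      have hsgn : IsUnit ((Equiv.Perm.sign c : ℤ) : O) := by
        rcases Int.units_eq_one_or (Equiv.Perm.sign c) with h | h <;> rw [h] <;> simp
      -- conclude ϖ ∈ p ^ 2
      obtain ⟨v, hv⟩ := hVunit
      obtain ⟨s, hs⟩ := hsgn
      obtain ⟨w, hw⟩ : IsUnit (((s : O) * u) * v) := ((s.isUnit.mul u.isUnit).mul v.isUnit)
      apply hϖp2
      have h3 : ((Equiv.Perm.sign c : ℤ) : O) * ∏ i, (M - 1) i (c i) = ϖ * ↑w := by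
        rw [hprod, ← hs, ← hv, hw]
        ring
      have hϖ_eq : ϖ = (((Equiv.Perm.sign c : ℤ) : O) * ∏ i, (M - 1) i (c i)) * ↑w⁻¹ := by
        rw [h3]
        exact (Units.mul_inv_cancel_right ϖ w).symm
      rw [hϖ_eq]
      exact Ideal.mul_mem_right _ _ hterm
    -- the characteristic polynomial over O
    set q : Polynomial O := (M - 1).charpoly with hq
    have hmonic : q.Monic := Matrix.charpoly_monic _
    have hdegq : q.natDegree = (n+2) := by
      rw [hq, Matrix.charpoly_natDegree_eq_dim, Fintype.card_fin]
    -- reduction mod p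
    have hmod : q.map (Ideal.Quotient.mk p) = X ^ (n+2) := by
      rw [hq, ← Matrix.charpoly_map]
      have htri : ((M - 1).map (Ideal.Quotient.mk p)).BlockTriangular id := by
        intro i j hji
        have hji' : j < i := hji
        rw [Matrix.map_apply, hsub_ne i j (fun h => absurd (h ▸ hji') (lt_irrefl _)),
          Ideal.Quotient.eq_zero_iff_mem]
        exact hMl i j hji'
      rw [Matrix.charpoly_of_upperTriangular _ htri]
      have hdiag0 : ∀ i : Fin (n+2), ((M - 1).map (Ideal.Quotient.mk p)) i i = 0 := by
        intro i
        rw [Matrix.map_apply, hsub_eq, Ideal.Quotient.eq_zero_iff_mem]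
        exact hMd i
      calc ∏ i : Fin (n+2), (X - C (((M - 1).map (Ideal.Quotient.mk p)) i i))
          = ∏ _i : Fin (n+2), (X : Polynomial (O ⧸ p)) := by
            apply Finset.prod_congr rfl; intro i _; rw [hdiag0 i]; simp
        _ = X ^ (n+2) := by rw [Finset.prod_const, Finset.card_univ, Fintype.card_fin]
    have hcoeff : ∀ k, k < q.natDegree → q.coeff k ∈ p := by
      intro k hk
      rw [hdegq] at hk
      have hk0 : (Ideal.Quotient.mk p) (q.coeff k) = 0 := by
        rw [← Polynomial.coeff_map, hmod, Polynomial.coeff_X_pow, if_neg (by omega)]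
      exact Ideal.Quotient.eq_zero_iff_mem.1 hk0
    have hc0 : q.coeff 0 ∉ p ^ 2 := by
      intro hc
      apply hdet
      have hh := Matrix.det_eq_sign_charpoly_coeff (M - 1)
      rw [Fintype.card_fin] at hh
      rw [hh]
      exact Ideal.mul_mem_left _ _ hc
    have heis : q.IsEisensteinAt p :=
      { leading := by rw [hmonic.leadingCoeff]; exact hone
        mem := fun {k} hk => hcoeff k hk
        notMem := hc0 }
    -- the map of q to E
    have hmapq : q.map (algebraMap O E) = (g - 1).charpoly := by
      rw [hq, ← Matrix.charpoly_map]
      congr 1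
      ext i j
      by_cases hij : i = j
      · subst hij
        simp [Matrix.map_apply, Matrix.sub_apply, Matrix.one_apply_eq, map_sub, _root_.map_one, hgM]
      · simp [Matrix.map_apply, Matrix.sub_apply, Matrix.one_apply_ne hij, hgM]
    -- irreducibility over O then E
    have hirrO : Irreducible q :=
      heis.irreducible (Ideal.IsMaximal.isPrime (IsLocalRing.maximalIdeal.isMaximal O))
        hmonic.isPrimitive (by rw [hdegq]; omega)
    have hirrE : Irreducible ((g - 1).charpoly) := by
      rw [← hmapq]
      exact (hmonic.irreducible_iff_irreducible_map_fraction_map (K := E)).1 hirrO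
    refine ⟨⟨q, heis, hmapq⟩, hirrE, ?_⟩
    -- separability
    have hsep1 : ((g - 1).charpoly).Separable := hirrE.separable
    have hcomp : Matrix.charpoly g = ((g - 1).charpoly).comp (X - C 1) := by
      have hmm : (Matrix.charmatrix (g - 1)).map (Polynomial.aeval (X - C 1 : Polynomial E))
          = Matrix.charmatrix g := by
        ext i j
        by_cases hij : i = j
        · subst hij
          rw [Matrix.map_apply, Matrix.charmatrix_apply_eq, Matrix.charmatrix_apply_eq]
          simp only [Matrix.sub_apply, Matrix.one_apply_eq, map_sub, aeval_X, aeval_C,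
            Polynomial.algebraMap_eq]
          ring_nf
        · rw [Matrix.map_apply, Matrix.charmatrix_apply_ne _ _ _ hij,
            Matrix.charmatrix_apply_ne _ _ _ hij]
          simp [Matrix.sub_apply, Matrix.one_apply_ne hij, aeval_C, Polynomial.algebraMap_eq]
      rw [Matrix.charpoly, Matrix.charpoly, ← hmm, comp_eq_aeval]
      exact ((Polynomial.aeval (X - C 1 : Polynomial E)).map_det _).symm
    obtain ⟨a, b, hab⟩ := (Polynomial.separable_def' _).1 hsep1
    rw [hcomp]
    apply (Polynomial.separable_def' _).2
    refine ⟨a.comp (X - C 1), b.comp (X - C 1), ?_⟩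
    have hder : derivative (((g - 1).charpoly).comp (X - C 1))
        = (derivative ((g - 1).charpoly)).comp (X - C 1) := by
      rw [Polynomial.derivative_comp]
      simp
    rw [hder, ← Polynomial.mul_comp, ← Polynomial.mul_comp, ← Polynomial.add_comp, hab,
      Polynomial.one_comp]
end

section
/- Let k_E/k_F be a quadratic extension of finite fields with conjugation c, ψ a nontrivial additive character of k_F, and h₁, …, h_{n−1} ∈ k_E^×, h_n, h' ∈ k_F^×, b ∈ k_F^×. Then Σ ψ(Tr(t₁/t₂·h₁ + ⋯ + t_{n−1}/t_n·h_{n−1}))·ψ(t_n·c(t_n)·h_n + b·h'/(t₁·c(t₁))), summing over t₁,…,t_{n−1} ∈ k_E^× and t_n ranging over a set of representatives of k_E^×/U(1), equals Kl^{n−1,2}_{Nr(h₁)⋯Nr(h_{n−1})·h_n·h'·b}(ψ; k_E/k_F), where U(1) = ker(Nr: k_E^× → k_F^×). -/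
open Finset

lemma tel_Ico {G : Type*} [CommGroup G] (f : ℕ → G) {j n : ℕ} (hj : j ≤ n) :
    ∏ i ∈ Finset.Ico j n, f i / f (i + 1) = f j / f n := by
  rw [Finset.prod_Ico_eq_div _ hj, Finset.prod_range_div', Finset.prod_range_div']
  simp [div_eq_mul_inv, mul_inv_rev, mul_comm, mul_assoc, mul_left_comm]

lemma tel_fin {G : Type*} [CommGroup G] {n : ℕ} (g : Fin (n + 1) → G) (j : Fin (n + 1)) :
    ∏ i ∈ Finset.univ.filter (fun i : Fin n => (j : ℕ) ≤ (i : ℕ)),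
        g i.castSucc / g i.succ = g j / g (Fin.last n) := by
  set f : ℕ → G := fun k => g ⟨min k n, by omega⟩ with hf
  have h1 : ∀ i : Fin n, g i.castSucc / g i.succ = f (i : ℕ) / f ((i : ℕ) + 1) := by
    intro i
    have e1 : i.castSucc = (⟨min (i : ℕ) n, by omega⟩ : Fin (n+1)) := by
      ext; simp [Nat.min_eq_left i.isLt.le]
    have e2 : i.succ = (⟨min ((i : ℕ) + 1) n, by omega⟩ : Fin (n+1)) := by
      ext; simp [Nat.min_eq_left i.isLt]
    rw [hf, e1, e2]
  have hj' : f (j : ℕ) = g j := by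
    show g _ = g j
    congr 1; apply Fin.ext; simp; omega
  have hn' : f n = g (Fin.last n) := by
    show g _ = g (Fin.last n)
    congr 1; apply Fin.ext; simp [Fin.last]
  calc ∏ i ∈ Finset.univ.filter (fun i : Fin n => (j : ℕ) ≤ (i : ℕ)),
          g i.castSucc / g i.succ
      = ∏ i ∈ Finset.univ.filter (fun i : Fin n => (j : ℕ) ≤ (i : ℕ)),
          f (i : ℕ) / f ((i : ℕ) + 1) := Finset.prod_congr rfl fun i _ => h1 i
    _ = ∏ i : Fin n, (if (j : ℕ) ≤ (i : ℕ) then f (i : ℕ) / f ((i : ℕ) + 1) else 1) :=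
          Finset.prod_filter _ _
    _ = ∏ k ∈ Finset.range n, (if (j : ℕ) ≤ k then f k / f (k + 1) else 1) :=
          Fin.prod_univ_eq_prod_range (fun k => if (j : ℕ) ≤ k then f k / f (k + 1) else 1) n
    _ = ∏ i ∈ (Finset.range n).filter (fun k => (j : ℕ) ≤ k), f i / f (i + 1) :=
          (Finset.prod_filter _ _).symm
    _ = ∏ i ∈ Finset.Ico (j : ℕ) n, f i / f (i + 1) := by
          congr 1; ext k; simp [Finset.mem_Ico]; tauto
    _ = f (j : ℕ) / f n := tel_Ico f (by omega)
    _ = g j / g (Fin.last n) := by rw [hj', hn']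

lemma split_fin {G : Type*} [CommGroup G] {n : ℕ} (f : Fin n → G) (j : Fin n) :
    ∏ i ∈ Finset.univ.filter (fun i : Fin n => (j : ℕ) ≤ (i : ℕ)), f i
      = f j * ∏ i ∈ Finset.univ.filter (fun i : Fin n => (j : ℕ) + 1 ≤ (i : ℕ)), f i := by
  have hins : Finset.univ.filter (fun i : Fin n => (j : ℕ) ≤ (i : ℕ))
      = insert j (Finset.univ.filter (fun i : Fin n => (j : ℕ) + 1 ≤ (i : ℕ))) := by
    ext i
    simp only [Finset.mem_filter, Finset.mem_univ, true_and, Finset.mem_insert, Fin.ext_iff]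
    omega
  rw [hins, Finset.prod_insert (by simp)]

@[simp] lemma units_val_prod {M ι : Type*} [CommMonoid M] (s : Finset ι) (f : ι → Mˣ) :
    ((∏ i ∈ s, f i : Mˣ) : M) = ∏ i ∈ s, ((f i : M)) :=
  map_prod (Units.coeHom M) f s

lemma norm_unit_surjective (kF kE : Type) [Field kF] [Fintype kF]
    [Field kE] [Fintype kE] [Algebra kF kE]
    (hdeg : Module.finrank kF kE = 2)
    (c : kE ≃ₐ[kF] kE) (hc : c ≠ AlgEquiv.refl)
    (hnorm : ∀ z : kE, algebraMap kF kE (Algebra.norm kF z) = z * c z) :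
    Function.Surjective (Units.map (Algebra.norm kF : kE →* kF)) := by
  classical
  set q := Fintype.card kF with hqdef
  have hq2 : 2 ≤ q := Fintype.one_lt_card
  have hcardE : Fintype.card kE = q ^ 2 := by
    rw [← hdeg]; exact Module.card_eq_pow_finrank
  -- characteristic
  obtain ⟨p, hp⟩ := CharP.exists kF
  haveI : CharP kF p := hp
  haveI hpp : Fact p.Prime := ⟨(CharP.char_is_prime kF p)⟩
  haveI : CharP kE p := charP_of_injective_algebraMap' kF p
  obtain ⟨k, hcard⟩ : ∃ k : ℕ, q = p ^ k := by
    obtain ⟨k, _, hk⟩ := FiniteField.card kF p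
    exact ⟨k, hk⟩
  -- Frobenius as an algebra equiv
  let φ₀ : kE →+* kE := iterateFrobenius kE p k
  have hφ₀ : ∀ x : kE, φ₀ x = x ^ q := by
    intro x; rw [hcard]; simp [φ₀, iterateFrobenius_def]
  let φA : kE →ₐ[kF] kE :=
    { toRingHom := φ₀
      commutes' := fun u => by
        show φ₀ _ = _
        rw [hφ₀, ← map_pow, FiniteField.pow_card] }
  let φ : kE ≃ₐ[kF] kE := AlgEquiv.ofBijective φA
    ((Finite.injective_iff_bijective).mp (φA.toRingHom.injective))
  have hφ : ∀ x : kE, φ x = x ^ q := hφ₀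
  -- a generator of kEˣ
  obtain ⟨g, hg⟩ := IsCyclic.exists_generator (α := kEˣ)
  have hordg : orderOf g = q ^ 2 - 1 := by
    rw [orderOf_eq_card_of_forall_mem_zpowers hg, Nat.card_eq_fintype_card,
      Fintype.card_units, hcardE]
  have hφne : φ ≠ AlgEquiv.refl := by
    intro hrefl
    have h1 : ((g : kE)) ^ q = (g : kE) := by
      have := congrArg (fun ψ : kE ≃ₐ[kF] kE => ψ (g : kE)) hrefl
      simpa [hφ] using this
    have h2 : g ^ q = g ^ 1 := by
      apply Units.ext; push_cast; simpa using h1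
    have h3 : q ≡ 1 [MOD orderOf g] := (pow_eq_pow_iff_modEq.mp h2)
    have h4 : orderOf g ∣ q - 1 := (Nat.modEq_iff_dvd' (by omega)).mp h3.symm
    have h5 : q ^ 2 - 1 ≤ q - 1 :=
      hordg ▸ Nat.le_of_dvd (by omega) h4
    have e1 : 2 * q ≤ q * q := Nat.mul_le_mul_right q hq2
    rw [sq] at h5
    generalize q * q = m at e1 h5
    omega
  -- `c = φ` since the automorphism group has two elements
  have hAut : Fintype.card (kE ≃ₐ[kF] kE) = 2 := by
    rw [← Nat.card_eq_fintype_card, IsGalois.card_aut_eq_finrank, hdeg]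
  have hcφ : c = φ := by
    by_contra hne
    have h3 : ({AlgEquiv.refl, c, φ} : Finset (kE ≃ₐ[kF] kE)).card = 3 := by
      rw [Finset.card_insert_of_notMem (by simp [Ne.symm hc, Ne.symm hφne]),
        Finset.card_insert_of_notMem (by simp [hne]), Finset.card_singleton]
    have h4 : ({AlgEquiv.refl, c, φ} : Finset (kE ≃ₐ[kF] kE)).card ≤ 2 := by
      rw [← hAut, ← Finset.card_univ]
      exact Finset.card_le_card (Finset.subset_univ _)
    omega
  -- the kernel of the norm has at most `q + 1` elements
  set N : kEˣ →* kFˣ := Units.map (Algebra.norm kF : kE →* kF) with hN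
  have hker : ∀ z : kEˣ, z ∈ N.ker → ((z : kE)) ^ (q + 1) = 1 := by
    intro z hz
    have h1 : Algebra.norm kF ((z : kE)) = 1 := by
      have := congrArg (fun u : kFˣ => (u : kF)) hz
      simpa [hN] using this
    have h2 : (z : kE) * c (z : kE) = 1 := by
      rw [← hnorm, h1, map_one]
    rw [hcφ, hφ] at h2
    rw [pow_succ']
    linear_combination h2
  have hkercard : Nat.card N.ker ≤ q + 1 := by
    have hinj : Function.Injective
        (fun z : N.ker => ((z : kEˣ) : kE)) := by
      intro a b hab
      exact Subtype.ext (Units.ext hab)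
    have hmem : ∀ z : N.ker, ((z : kEˣ) : kE) ∈
        (Polynomial.nthRoots (q + 1) (1 : kE)).toFinset := by
      intro z
      rw [Multiset.mem_toFinset, Polynomial.mem_nthRoots (by omega)]
      exact hker z z.2
    have := Fintype.card_le_of_injective
      (fun z : N.ker => (⟨((z : kEˣ) : kE), hmem z⟩ :
        ((Polynomial.nthRoots (q + 1) (1 : kE)).toFinset : Finset kE)))
      (fun a b hab => hinj (congrArg Subtype.val hab))
    rw [Fintype.card_coe] at this
    calc Nat.card N.ker = Fintype.card N.ker := Nat.card_eq_fintype_card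
      _ ≤ (Polynomial.nthRoots (q + 1) (1 : kE)).toFinset.card := this
      _ ≤ Multiset.card (Polynomial.nthRoots (q + 1) (1 : kE)) :=
          Multiset.toFinset_card_le _
      _ ≤ q + 1 := Polynomial.card_nthRoots _ _
  -- counting
  have hEu : Nat.card kEˣ = q ^ 2 - 1 := by
    rw [Nat.card_eq_fintype_card, Fintype.card_units, hcardE]
  have hFu : Nat.card kFˣ = q - 1 := by
    rw [Nat.card_eq_fintype_card, Fintype.card_units]
  have hsplit : Nat.card kEˣ = Nat.card (kEˣ ⧸ N.ker) * Nat.card N.ker :=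
    Subgroup.card_eq_card_quotient_mul_card_subgroup N.ker
  have hquot : Nat.card (kEˣ ⧸ N.ker) = Nat.card N.range :=
    Nat.card_congr (QuotientGroup.quotientKerEquivRange N).toEquiv
  have hrle : Nat.card N.range ≤ q - 1 := by
    rw [← hFu]; exact Subgroup.card_le_card_group N.range
  have hrge : Nat.card N.range = q - 1 := by
    have h1 : q ^ 2 - 1 = Nat.card N.range * Nat.card N.ker := by
      rw [← hEu, hsplit, hquot]
    have h2 : q ^ 2 - 1 ≤ Nat.card N.range * (q + 1) := by
      calc q ^ 2 - 1 = Nat.card N.range * Nat.card N.ker := h1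
        _ ≤ Nat.card N.range * (q + 1) := Nat.mul_le_mul_left _ hkercard
    have hid : (q - 1) * (q + 1) = q ^ 2 - 1 := by
      obtain ⟨m, hm⟩ : ∃ m, q = m + 2 := ⟨q - 2, by omega⟩
      rw [hm, sq]
      have e1 : (m + 2) * (m + 2) = m * m + 4 * m + 4 := by ring
      rw [e1]
      have e2 : m + 2 - 1 = m + 1 := by omega
      rw [e2]
      have e3 : (m + 1) * (m + 2 + 1) = m * m + 4 * m + 3 := by ring
      rw [e3]
      omega
    have h3 : (q - 1) * (q + 1) ≤ Nat.card N.range * (q + 1) := by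
      rw [hid]; exact h2
    have h4 : q - 1 ≤ Nat.card N.range :=
      Nat.le_of_mul_le_mul_right h3 (by omega)
    omega
  have htop : N.range = ⊤ := by
    apply Subgroup.eq_top_of_card_eq
    rw [hrge, hFu]
  exact MonoidHom.range_eq_top.mp htop

/-- The character sum appearing in the computation of characters of simple supercuspidal
representations of `U_{E/F}(2n)` equals the Kloosterman sum
`Kl^{n−1,2}_{Nr(h₁)⋯Nr(h_{n−1})·h_n·h'·b}` (here the paper's `n` is `n + 1`, the variables
`h₁,…,h_{n−1}` are `h : Fin n → kEˣ`, and `t_n` runs over a set `R` of representatives of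
`k_E^×/U(1)`). -/
theorem stmt12 (kF kE : Type) [Field kF] [Fintype kF] [DecidableEq kF]
    [Field kE] [Fintype kE] [DecidableEq kE] [Algebra kF kE]
    (hdeg : Module.finrank kF kE = 2)
    (c : kE ≃ₐ[kF] kE) (hc : c ≠ AlgEquiv.refl)
    (hnorm : ∀ z : kE, algebraMap kF kE (Algebra.norm kF z) = z * c z)
    (ψ : AddChar kF ℂ) (hψ : ψ ≠ 1)
    (n : ℕ) (h : Fin n → kEˣ) (hn h' b : kFˣ)
    (R : Finset kEˣ)
    (hR : ∀ z : kEˣ, ∃! t : kEˣ, t ∈ R ∧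
      Algebra.norm kF (z : kE) = Algebra.norm kF (t : kE)) :
    (∑ T : Fin (n + 1) → kEˣ,
        if T (Fin.last n) ∈ R then
          ψ (Algebra.trace kF kE
              (∑ i : Fin n, ((T i.castSucc : kE) / (T i.succ : kE)) * (h i : kE))) *
            ψ (Algebra.norm kF ((T (Fin.last n) : kE)) * (hn : kF) +
                (b : kF) * (h' : kF) / Algebra.norm kF ((T 0 : kE)))
        else 0) =
      Kl kF kE ψ n 2
        ((∏ i, Algebra.norm kF ((h i : kE))) * (hn : kF) * (h' : kF) * (b : kF)) := by
  classical
  set Nm : kEˣ →* kFˣ := Units.map (Algebra.norm kF : kE →* kF) with hNmdef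
  have hNval : ∀ z : kEˣ, ((Nm z : kFˣ) : kF) = Algebra.norm kF (z : kE) := fun z => rfl
  have hsurj : Function.Surjective Nm := norm_unit_surjective kF kE hdeg c hc hnorm
  -- representative function
  have hrep : ∀ u : kFˣ, ∃ r : kEˣ, r ∈ R ∧ Nm r = u ∧
      ∀ t : kEˣ, t ∈ R → Nm t = u → t = r := by
    intro u
    obtain ⟨z, hz⟩ := hsurj u
    obtain ⟨r, ⟨hrR, hrn⟩, hru⟩ := hR z
    refine ⟨r, hrR, ?_, ?_⟩
    · apply Units.ext; rw [hNval r, ← hrn, ← hNval z, hz]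
    · intro t htR htu
      refine hru t ⟨htR, ?_⟩
      rw [← hNval t, htu, ← hz, hNval z]
  choose rep repR repN repU using hrep
  rw [Kl, ← Finset.sum_product']
  rw [← Finset.sum_filter, ← Finset.sum_filter]
  refine Finset.sum_nbij'
    (fun T => (fun i => T i.castSucc / T i.succ * h i,
      ![Nm (T (Fin.last n)) * hn, b * h' / Nm (T 0)]))
    (fun p j => (∏ i ∈ Finset.univ.filter (fun i : Fin n => (j : ℕ) ≤ (i : ℕ)),
        p.1 i / h i) * rep (p.2 0 / hn))
    ?_ ?_ ?_ ?_ ?_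
  · -- membership forward
    intro T hT
    simp only [Finset.mem_filter, Finset.mem_univ, true_and, Finset.mem_product]
    have htel : (∏ i : Fin n, (Nm (T i.castSucc) / Nm (T i.succ)))
        = Nm (T 0) / Nm (T (Fin.last n)) := by
      have h0 : Finset.univ.filter
          (fun i : Fin n => (((0 : Fin (n+1))) : ℕ) ≤ (i : ℕ)) = Finset.univ := by
        ext i; simp
      have := tel_fin (fun j => Nm (T j)) 0
      rw [h0] at this
      exact this
    have efac : ∀ i : Fin n, (Algebra.norm kF) ((T i.castSucc / T i.succ * h i : kEˣ) : kE)
        = ((Nm (T i.castSucc) / Nm (T i.succ) * Nm (h i) : kFˣ) : kF) := by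
      intro i
      rw [← hNval]
      congr 1
      rw [map_mul, map_div]
    simp only [efac]
    rw [← units_val_prod, Finset.prod_mul_distrib, htel]
    simp only [Fin.prod_univ_two, Matrix.cons_val_zero, Matrix.cons_val_one, Matrix.head_cons]
    have hne0 : Algebra.norm kF ((T 0 : kE)) ≠ 0 := by
      rw [← hNval]; exact Units.ne_zero _
    have hnel : Algebra.norm kF ((T (Fin.last n) : kE)) ≠ 0 := by
      rw [← hNval]; exact Units.ne_zero _
    have hnehn : ((hn : kFˣ) : kF) ≠ 0 := Units.ne_zero _
    push_cast
    simp only [hNval]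
    field_simp
  · -- membership backward
    intro p hp
    simp only [Finset.mem_filter, Finset.mem_univ, true_and]
    have hemp : Finset.univ.filter
        (fun i : Fin n => ((Fin.last n : Fin (n+1)) : ℕ) ≤ (i : ℕ)) = ∅ := by
      ext i
      simp only [Finset.mem_filter, Finset.mem_univ, true_and, Finset.notMem_empty,
        iff_false, Fin.val_last, not_le]
      exact i.isLt
    rw [hemp]
    simpa using repR (p.2 0 / hn)
  · -- left inverse
    intro T hT
    have hTR : T (Fin.last n) ∈ R := by simpa using hT
    funext j
    dsimp only
    simp only [Matrix.cons_val_zero]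
    have e1 : ∀ i : Fin n, T i.castSucc / T i.succ * h i / h i = T i.castSucc / T i.succ :=
      fun i => mul_div_cancel_right _ _
    rw [Finset.prod_congr rfl fun i _ => e1 i, tel_fin T j]
    have e2 : Nm (T (Fin.last n)) * hn / hn = Nm (T (Fin.last n)) := mul_div_cancel_right _ _
    rw [e2, ← repU (Nm (T (Fin.last n))) (T (Fin.last n)) hTR rfl]
    rw [div_mul_eq_mul_div]
    exact mul_div_cancel_right _ _
  · -- right inverse
    intro p hp
    have hcond : (∏ i, Algebra.norm kF ((p.1 i : kE))) * (∏ j : Fin 2, ((p.2 j : kF)))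
        = (∏ i, Algebra.norm kF ((h i : kE))) * hn * h' * b := by
      simpa using hp
    obtain ⟨t, s⟩ := p
    have hcondU : (∏ k, Nm (t k)) * (s 0 * s 1) = (∏ k, Nm (h k)) * hn * h' * b := by
      apply Units.ext
      push_cast
      simpa [Fin.prod_univ_two, hNval] using hcond
    refine Prod.ext ?_ ?_
    · funext i
      dsimp only
      simp only [Fin.coe_castSucc, Fin.val_succ]
      rw [split_fin (fun k => t k / h k) i]
      rw [mul_assoc, mul_div_cancel_right]
      rw [div_mul_eq_mul_div]
      exact mul_div_cancel_right _ _
    · funext j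
      fin_cases j
      · beta_reduce
        simp only [Fin.mk_zero, Fin.mk_one, Matrix.cons_val_zero, Matrix.cons_val_one,
          Matrix.head_cons]
        have hemp : Finset.univ.filter
            (fun i : Fin n => ((Fin.last n : Fin (n+1)) : ℕ) ≤ (i : ℕ)) = ∅ := by
          ext i
          simp only [Finset.mem_filter, Finset.mem_univ, true_and, Finset.notMem_empty,
            iff_false, Fin.val_last, not_le]
          exact i.isLt
        rw [hemp]
        rw [Finset.prod_empty, one_mul, repN]
        rw [div_mul_eq_mul_div]
        exact mul_div_cancel_right _ _
      · beta_reduce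
        simp only [Fin.mk_zero, Fin.mk_one, Matrix.cons_val_zero, Matrix.cons_val_one,
          Matrix.head_cons]
        have h0 : Finset.univ.filter
            (fun i : Fin n => (((0 : Fin (n+1))) : ℕ) ≤ (i : ℕ)) = Finset.univ := by
          ext i; simp
        rw [h0]
        have e : Nm ((∏ k, (t k / h k)) * rep (s 0 / hn))
            = ((∏ k, Nm (t k)) / ∏ k, Nm (h k)) * (s 0 / hn) := by
          rw [map_mul, repN, map_prod]
          congr 1
          rw [← Finset.prod_div_distrib]
          exact Finset.prod_congr rfl fun k _ => map_div Nm _ _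
        rw [e]
        have hcondV := congrArg (fun u : kFˣ => (u : kF)) hcondU
        push_cast at hcondV
        simp only [hNval] at hcondV
        apply Units.ext
        push_cast
        simp only [hNval]
        have hPt : (∏ k, Algebra.norm kF ((t k : kE))) ≠ 0 := by
          apply Finset.prod_ne_zero_iff.mpr
          intro k _
          rw [← hNval]; exact Units.ne_zero _
        have hPh : (∏ k, Algebra.norm kF ((h k : kE))) ≠ 0 := by
          apply Finset.prod_ne_zero_iff.mpr
          intro k _
          rw [← hNval]; exact Units.ne_zero _
        field_simp
        linear_combination -hcondV
  · -- values agree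
    intro T hT
    dsimp only
    simp [Fin.sum_univ_two, Matrix.cons_val_zero, Matrix.cons_val_one, Matrix.head_cons,
      Units.val_div_eq_div_val, hNval]
end

section
/- Let E/F be a quadratic unramified extension of p-adic fields (p odd) with conjugation c and uniformizer ϖ ∈ F. Let u ∈ O_F^× and N = 2n. Set g = 1 + φ_u ∈ GL_N(E) where φ_u has superdiagonal 1's and lower-left entry ϖu. Then N(g) := g·θ(g) = (1 − ϖu)^{−1}·M, where θ(g) = J·ᵗc(g)^{−1}·J^{−1} (J antidiagonal with alternating signs) and M is the matrix with M_{ii} = 1 + ϖu, M_{ij} = 2 for i < j, and M_{ij} = 2ϖu for i > j. Moreover N(g) satisfies ᵗc(N(g))·J·N(g) = J, i.e., N(g) lies in the unitary group U_{E/F}(N)(F). -/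
open Matrix

namespace Stmt14Aux

variable {E : Type} [Field E]

def phi (N : ℕ) (a : E) : Matrix (Fin N) (Fin N) E := Matrix.of fun i j =>
  if (i : ℕ) + 1 = (j : ℕ) then 1
  else if (i : ℕ) = N - 1 ∧ (j : ℕ) = 0 then a else 0

def Sm (N : ℕ) (a : E) : Matrix (Fin N) (Fin N) E := Matrix.of fun i j =>
  if (i : ℕ) ≤ (j : ℕ) then 1 else a

def Jm (N : ℕ) : Matrix (Fin N) (Fin N) E := Matrix.of fun i j =>
  if (i : ℕ) + (j : ℕ) + 1 = N then (-1 : E) ^ (i : ℕ) else 0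

def Mm (N : ℕ) (a : E) : Matrix (Fin N) (Fin N) E := Matrix.of fun i j =>
  if i = j then 1 + a else if i < j then 2 else 2 * a

lemma phi_apply_eq_zero {N : ℕ} (a : E) {i k : Fin N}
    (h1 : ¬ ((i : ℕ) + 1 = (k : ℕ))) (h2 : ¬ ((i : ℕ) = N - 1 ∧ (k : ℕ) = 0)) :
    phi N a i k = 0 := by
  simp only [phi, Matrix.of_apply]
  rw [if_neg h1, if_neg h2]

lemma phi_mul {N : ℕ} (hN : 0 < N) (a : E) (A : Matrix (Fin N) (Fin N) E) (i j : Fin N) :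
    (phi N a * A) i j =
      if h : (i : ℕ) + 1 < N then A ⟨(i : ℕ) + 1, h⟩ j else a * A ⟨0, hN⟩ j := by
  rw [Matrix.mul_apply]
  split
  · next h =>
    rw [Finset.sum_eq_single (⟨(i : ℕ) + 1, h⟩ : Fin N)]
    · have h1 : phi N a i ⟨(i : ℕ) + 1, h⟩ = 1 := by simp [phi]
      rw [h1, one_mul]
    · intro k _ hk
      have hk' : ¬ ((i : ℕ) + 1 = (k : ℕ)) := fun hc => hk (Fin.ext hc.symm)
      rw [phi_apply_eq_zero a hk' (by rintro ⟨h1, h2⟩; omega), zero_mul]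
    · intro h; exact absurd (Finset.mem_univ _) h
  · next h =>
    have hi : (i : ℕ) = N - 1 := by have := i.isLt; omega
    rw [Finset.sum_eq_single (⟨0, hN⟩ : Fin N)]
    · have h1 : phi N a i ⟨0, hN⟩ = a := by
        simp only [phi, Matrix.of_apply]
        rw [if_neg (by omega), if_pos (by exact ⟨hi, trivial⟩)]
      rw [h1]
    · intro k _ hk
      have hk0 : ¬ ((k : ℕ) = 0) := fun hc => hk (Fin.ext hc)
      rw [phi_apply_eq_zero a (by have := k.isLt; omega) (by tauto), zero_mul]
    · intro h; exact absurd (Finset.mem_univ _) h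

lemma mul_phiT {N : ℕ} (hN : 0 < N) (a : E) (A : Matrix (Fin N) (Fin N) E) (i j : Fin N) :
    (A * (phi N a)ᵀ) i j =
      if h : (j : ℕ) + 1 < N then A i ⟨(j : ℕ) + 1, h⟩ else a * A i ⟨0, hN⟩ := by
  rw [Matrix.mul_apply]
  simp only [Matrix.transpose_apply]
  split
  · next h =>
    rw [Finset.sum_eq_single (⟨(j : ℕ) + 1, h⟩ : Fin N)]
    · have h1 : phi N a j ⟨(j : ℕ) + 1, h⟩ = 1 := by simp [phi]
      rw [h1, mul_one]
    · intro k _ hk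
      have hk' : ¬ ((j : ℕ) + 1 = (k : ℕ)) := fun hc => hk (Fin.ext hc.symm)
      rw [phi_apply_eq_zero a hk' (by rintro ⟨h1, h2⟩; omega), mul_zero]
    · intro h; exact absurd (Finset.mem_univ _) h
  · next h =>
    have hj : (j : ℕ) = N - 1 := by have := j.isLt; omega
    rw [Finset.sum_eq_single (⟨0, hN⟩ : Fin N)]
    · have h1 : phi N a j ⟨0, hN⟩ = a := by
        simp only [phi, Matrix.of_apply]
        rw [if_neg (by omega), if_pos (by exact ⟨hj, trivial⟩)]
      rw [h1, mul_comm]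
    · intro k _ hk
      have hk0 : ¬ ((k : ℕ) = 0) := fun hc => hk (Fin.ext hc)
      rw [phi_apply_eq_zero a (by have := k.isLt; omega) (by tauto), mul_zero]
    · intro h; exact absurd (Finset.mem_univ _) h

lemma L1 {N : ℕ} (hN : 0 < N) (a : E) :
    (1 - phi N a) * Sm N a = (1 - a) • (1 : Matrix (Fin N) (Fin N) E) := by
  ext i j
  rw [sub_mul, one_mul, Matrix.sub_apply, phi_mul hN, Matrix.smul_apply, Matrix.one_apply]
  have hi := i.isLt; have hj := j.isLt
  simp only [Sm, Matrix.of_apply, smul_eq_mul, Fin.ext_iff, Fin.lt_iff_val_lt_val]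
  split_ifs <;> first | ring1 | (exfalso; omega)

lemma L2 {N : ℕ} (hN : 0 < N) (a : E) :
    (1 + phi N a) * Sm N a = Mm N a := by
  ext i j
  rw [add_mul, one_mul, Matrix.add_apply, phi_mul hN]
  have hi := i.isLt; have hj := j.isLt
  simp only [Sm, Mm, Matrix.of_apply, Fin.ext_iff, Fin.lt_iff_val_lt_val]
  split_ifs <;> first | ring1 | (exfalso; omega)

lemma L4 {N n : ℕ} (hNn : N = 2 * n) (hn : 0 < n) :
    (Jm N : Matrix (Fin N) (Fin N) E) * Jm N = -1 := by
  have hN : 0 < N := by omega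
  ext i j
  rw [Matrix.mul_apply, Matrix.neg_apply, Matrix.one_apply]
  have hi := i.isLt; have hj := j.isLt
  rw [Finset.sum_eq_single (⟨N - 1 - (i : ℕ), by omega⟩ : Fin N)]
  · simp only [Jm, Matrix.of_apply, Fin.val_mk]
    rw [if_pos (by omega)]
    by_cases hij : i = j
    · have hv : (i : ℕ) = (j : ℕ) := by rw [hij]
      rw [if_pos (by omega), if_pos hij, ← pow_add]
      have he : (i : ℕ) + (N - 1 - (i : ℕ)) = N - 1 := by omega
      rw [he]
      exact Odd.neg_one_pow (by rw [Nat.odd_iff]; omega)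
    · have hv : ¬ ((i : ℕ) = (j : ℕ)) := fun hc => hij (Fin.ext hc)
      rw [if_neg (by omega), if_neg hij, mul_zero, neg_zero]
  · intro k _ hk
    have hk' : ¬ ((i : ℕ) + (k : ℕ) + 1 = N) := fun hc =>
      hk (Fin.ext (by simp only [Fin.val_mk]; omega))
    simp only [Jm, Matrix.of_apply]
    rw [if_neg hk', zero_mul]
  · intro h; exact absurd (Finset.mem_univ _) h

lemma L5 {N n : ℕ} (hNn : N = 2 * n) (hn : 0 < n) (a : E) :
    (Jm N : Matrix (Fin N) (Fin N) E) * (phi N a)ᵀ = -(phi N a * Jm N) := by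
  have hN : 0 < N := by omega
  have hodd : ((-1 : E)) ^ (N - 1) = -1 := Odd.neg_one_pow (by rw [Nat.odd_iff]; omega)
  ext i j
  rw [Matrix.neg_apply, mul_phiT hN, phi_mul hN]
  have hi := i.isLt; have hj := j.isLt
  simp only [Jm, Matrix.of_apply, Fin.val_mk]
  split_ifs <;>
    first
      | ring1
      | (exfalso; omega)
      | (have hi1 : (i : ℕ) = N - 1 := by omega
         rw [hi1, hodd]; ring1)

lemma master {N n : ℕ} (hNn : N = 2 * n) (hn : 0 < n) (a : E) (ha : (1 : E) - a ≠ 0)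
    (c : E ≃+* E) (hca : c a = a) :
    (1 + phi N a) * (Jm N * ((((1 + phi N a).map (c : E → E)).transpose)⁻¹) * (Jm N)⁻¹) =
        (1 - a)⁻¹ • Mm N a ∧
      (((1 + phi N a) * (Jm N * ((((1 + phi N a).map (c : E → E)).transpose)⁻¹) * (Jm N)⁻¹)).map
            (c : E → E)).transpose * Jm N *
          ((1 + phi N a) * (Jm N * ((((1 + phi N a).map (c : E → E)).transpose)⁻¹) * (Jm N)⁻¹)) =
        Jm N := by
  have hN : 0 < N := by omega
  set φ := phi N a with hφdef
  set J := (Jm N : Matrix (Fin N) (Fin N) E) with hJdef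
  set B := (1 - a)⁻¹ • Sm N a with hBdef
  -- basic identities
  have hPB : (1 - φ) * B = 1 := by
    rw [hBdef, Matrix.mul_smul, L1 hN, smul_smul, inv_mul_cancel₀ ha, one_smul]
  have hgB : (1 + φ) * B = (1 - a)⁻¹ • Mm N a := by
    rw [hBdef, Matrix.mul_smul, L2 hN]
  have hJJ : J * J = -1 := L4 hNn hn
  have hJJ' : ∀ X : Matrix (Fin N) (Fin N) E, J * (J * X) = -X := fun X => by
    rw [← Matrix.mul_assoc, hJJ, neg_one_mul]
  have hJφT : J * φᵀ = -(φ * J) := L5 hNn hn a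
  have hmapg : (1 + φ).map (c : E → E) = 1 + φ := by
    ext i j
    simp only [Matrix.map_apply, Matrix.add_apply, Matrix.one_apply, hφdef, phi,
      Matrix.of_apply, _root_.map_add]
    split_ifs <;> simp [hca, map_ofNat]
  have hJgT : J * (1 + φ)ᵀ = (1 - φ) * J := by
    rw [transpose_add, transpose_one, mul_add, mul_one, hJφT, sub_mul, one_mul, sub_eq_add_neg]
  have hJPT : J * (1 - φ)ᵀ = (1 + φ) * J := by
    rw [transpose_sub, transpose_one, mul_sub, mul_one, hJφT, add_mul, one_mul, sub_neg_eq_add]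
  have hgT : (1 + φ)ᵀ = -(J * ((1 - φ) * J)) := by
    rw [← hJgT, hJJ', neg_neg]
  have hPT : (1 - φ)ᵀ = -(J * ((1 + φ) * J)) := by
    rw [← hJPT, hJJ', neg_neg]
  have hJinv : J⁻¹ = -J := Matrix.inv_eq_right_inv (by rw [mul_neg, hJJ, neg_neg])
  have hgTinv : ((1 + φ)ᵀ)⁻¹ = -(J * (B * J)) := by
    apply Matrix.inv_eq_right_inv
    rw [hgT, neg_mul_neg]
    simp only [Matrix.mul_assoc]
    rw [hJJ' (B * J)]
    simp only [mul_neg]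
    rw [← Matrix.mul_assoc (1 - φ) B J, hPB, one_mul, hJJ, neg_neg]
  have hθB : J * (((1 + φ).map (c : E → E))ᵀ)⁻¹ * J⁻¹ = B := by
    rw [hmapg, hgTinv, hJinv]
    simp only [mul_neg, neg_mul, neg_neg, Matrix.mul_assoc]
    rw [hJJ, mul_neg_one]
    simp only [mul_neg, neg_neg]
    rw [hJJ' B, neg_neg]
  constructor
  · rw [hθB, hgB]
  · rw [hθB, hgB]
    have hmapNg : ((1 - a)⁻¹ • Mm N a).map (c : E → E) = (1 - a)⁻¹ • Mm N a := by
      have h1 : c ((1 - a)⁻¹) = (1 - a)⁻¹ := by rw [map_inv₀, _root_.map_sub, _root_.map_one, hca]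
      ext i j
      simp only [Matrix.map_apply, Matrix.smul_apply, smul_eq_mul, _root_.map_mul, h1, Mm,
        Matrix.of_apply]
      congr 1
      split_ifs <;> simp [hca, map_ofNat]
    rw [hmapNg, ← hgB, transpose_mul]
    -- goal : Bᵀ * (1+φ)ᵀ * J * ((1+φ) * B) = J
    have hcomm : (1 - φ) * (1 + φ) = (1 + φ) * (1 - φ) := by noncomm_ring
    have hgTJ : (1 + φ)ᵀ * J = J * (1 - φ) := by
      rw [hgT]
      simp only [neg_mul, Matrix.mul_assoc, hJJ, mul_neg_one]
      simp only [mul_neg, neg_neg]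
    have hJg : J * (1 + φ) = (1 - φ)ᵀ * J := by
      rw [hPT]
      simp only [neg_mul, Matrix.mul_assoc, hJJ, mul_neg_one]
      simp only [mul_neg, neg_neg]
    have hBtPt : Bᵀ * (1 - φ)ᵀ = 1 := by
      rw [← transpose_mul, hPB, transpose_one]
    have hPgB : (1 - φ) * ((1 + φ) * B) = (1 + φ) := by
      rw [← Matrix.mul_assoc, hcomm, Matrix.mul_assoc, hPB, mul_one]
    calc Bᵀ * (1 + φ)ᵀ * J * ((1 + φ) * B)
        = Bᵀ * (((1 + φ)ᵀ * J) * ((1 + φ) * B)) := by simp only [Matrix.mul_assoc]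
      _ = Bᵀ * ((J * (1 - φ)) * ((1 + φ) * B)) := by rw [hgTJ]
      _ = Bᵀ * (J * ((1 - φ) * ((1 + φ) * B))) := by simp only [Matrix.mul_assoc]
      _ = Bᵀ * (J * (1 + φ)) := by rw [hPgB]
      _ = Bᵀ * ((1 - φ)ᵀ * J) := by rw [hJg]
      _ = (Bᵀ * (1 - φ)ᵀ) * J := by rw [Matrix.mul_assoc]
      _ = J := by rw [hBtPt, one_mul]

end Stmt14Aux

/-- For `g = 1 + φ_u` in `GL_{2n}(E)`, the twisted norm `N(g) = g·θ(g)` equals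
`(1 − ϖu)⁻¹·M` with `M` having diagonal entries `1 + ϖu`, entries `2` above the diagonal and
`2ϖu` below it; moreover `N(g)` lies in the unitary group, i.e. `ᵗc(N(g))·J·N(g) = J`. -/
theorem stmt14 (O E : Type) [CommRing O] [IsDomain O] [IsDiscreteValuationRing O]
    [Field E] [CharZero E] [Algebra O E] [IsFractionRing O E]
    (c : E ≃+* E) (hcc : ∀ x, c (c x) = x)
    (ϖO : O) (hϖ : Irreducible ϖO) (u : Oˣ)
    (hϖc : c (algebraMap O E ϖO) = algebraMap O E ϖO)
    (huc : c (algebraMap O E (u : O)) = algebraMap O E (u : O))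
    (n : ℕ) (hn : 0 < n) :
    let N := 2 * n
    let ϖ : E := algebraMap O E ϖO
    let v : E := algebraMap O E (u : O)
    let J : Matrix (Fin N) (Fin N) E := Matrix.of fun i j =>
      if (i : ℕ) + (j : ℕ) + 1 = N then (-1 : E) ^ (i : ℕ) else 0
    let θ : Matrix (Fin N) (Fin N) E → Matrix (Fin N) (Fin N) E := fun g =>
      J * ((g.map (c : E → E)).transpose)⁻¹ * J⁻¹
    let φ : Matrix (Fin N) (Fin N) E := Matrix.of fun i j =>
      if (i : ℕ) + 1 = (j : ℕ) then 1
      else if (i : ℕ) = N - 1 ∧ (j : ℕ) = 0 then ϖ * v else 0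
    let g := 1 + φ
    let M : Matrix (Fin N) (Fin N) E := Matrix.of fun i j =>
      if i = j then 1 + ϖ * v else if i < j then 2 else 2 * (ϖ * v)
    g * θ g = (1 - ϖ * v)⁻¹ • M ∧
      ((g * θ g).map (c : E → E)).transpose * J * (g * θ g) = J := by
  intro N ϖ v J θ φ g M
  have hcϖ : c ϖ = ϖ := hϖc
  have hcv : c v = v := huc
  have hca : c (ϖ * v) = ϖ * v := by rw [_root_.map_mul, hcϖ, hcv]
  have ha : (1 : E) - ϖ * v ≠ 0 := by
    intro h
    have h1 : ϖ * v = 1 := by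
      have := sub_eq_zero.mp h
      exact this.symm
    have h2 : algebraMap O E (ϖO * (u : O)) = algebraMap O E 1 := by
      rw [_root_.map_mul, _root_.map_one]; exact h1
    have h3 : ϖO * (u : O) = 1 := IsFractionRing.injective O E h2
    exact hϖ.not_isUnit (IsUnit.of_mul_eq_one _ h3)
  exact Stmt14Aux.master (N := N) rfl hn (ϖ * v) ha c hca
end
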